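/- Let x ∈ ℝⁿ and δ > 0. Suppose f : ℝⁿ → ℝ is differentiable with L-Lipschitz continuous gradient, m : ℝⁿ → ℝ is differentiable at x, |m(x+s) − m(x) − ⟨∇m(x), s⟩| ≤ ((κ_bmh − 1)/2)·‖s‖² for all s with ‖s‖ ≤ δ, and ‖∇m(x) − ∇f(x)‖ ≤ κ_grad·δ. Let φ : ℝⁿ → ℝ be arbitrary and let s ∈ ℝⁿ with ‖s‖ ≤ δ. Define ared := f(x) + φ(x) − f(x+s) − φ(x+s) and pred := m(x) + φ(x) − m(x+s) − φ(x+s). Then |ared − pred| ≤ 2·κ_val·δ² with κ_val := (L + κ_bmh + 2·κ_grad)/4; in particular, if pred ≥ 0 then −ared ≤ 2·κ_val·δ². -/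

import Mathlib

open RealInnerProductSpace

lemma descent_aux {n : ℕ} (f : EuclideanSpace ℝ (Fin n) → ℝ) (L : ℝ) (hL0 : 0 ≤ L)
    (hf : Differentiable ℝ f)
    (hflip : ∀ a b : EuclideanSpace ℝ (Fin n),
      ‖gradient f b - gradient f a‖ ≤ L * ‖b - a‖)
    (x s : EuclideanSpace ℝ (Fin n)) :
    |f (x + s) - f x - ⟪gradient f x, s⟫| ≤ L / 2 * ‖s‖ ^ 2 := by
  set g : ℝ → ℝ := fun t => f (x + t • s) - t * ⟪gradient f x, s⟫ - f x with hg
  have hderiv : ∀ t : ℝ, HasDerivAt g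
      (⟪gradient f (x + t • s) - gradient f x, s⟫) t := by
    intro t
    have h1 : HasDerivAt (fun t : ℝ => x + t • s) s t := by
      simpa using ((hasDerivAt_id t).smul_const s).const_add x
    have h2 : HasDerivAt (fun t : ℝ => f (x + t • s))
        (⟪gradient f (x + t • s), s⟫) t := by
      have h3 := ((hf (x + t • s)).hasGradientAt).hasFDerivAt.comp_hasDerivAt t h1
      simpa [InnerProductSpace.toDual, Function.comp_def] using h3
    have h4 : HasDerivAt (fun t : ℝ => t * ⟪gradient f x, s⟫)
        (⟪gradient f x, s⟫) t := by
      simpa using (hasDerivAt_id t).mul_const (⟪gradient f x, s⟫)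
    simpa [inner_sub_left, hg] using (h2.sub h4).sub_const (f x)
  have key : ∀ u ∈ Set.Icc (0:ℝ) 1, ‖g u‖ ≤ L * ‖s‖ ^ 2 / 2 * u ^ 2 := by
    have hcont : ContinuousOn g (Set.Icc (0:ℝ) 1) :=
      fun t _ => (hderiv t).continuousAt.continuousWithinAt
    have hder : ∀ t ∈ Set.Ico (0:ℝ) 1, HasDerivWithinAt g
        (⟪gradient f (x + t • s) - gradient f x, s⟫) (Set.Ici t) t :=
      fun t _ => (hderiv t).hasDerivWithinAt
    have ha : ‖g 0‖ ≤ L * ‖s‖ ^ 2 / 2 * 0 ^ 2 := by simp [hg]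
    have hB : ∀ t : ℝ, HasDerivAt (fun t => L * ‖s‖ ^ 2 / 2 * t ^ 2) (L * ‖s‖ ^ 2 * t) t := by
      intro t
      have := (hasDerivAt_pow 2 t).const_mul (L * ‖s‖ ^ 2 / 2)
      refine this.congr_deriv ?_
      push_cast
      ring
    have hbd : ∀ t ∈ Set.Ico (0:ℝ) 1,
        ‖⟪gradient f (x + t • s) - gradient f x, s⟫‖ ≤ L * ‖s‖ ^ 2 * t := by
      intro t ht
      have h5 : |⟪gradient f (x + t • s) - gradient f x, s⟫| ≤
          ‖gradient f (x + t • s) - gradient f x‖ * ‖s‖ := abs_real_inner_le_norm _ _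
      have h6 : ‖gradient f (x + t • s) - gradient f x‖ ≤ L * ‖t • s‖ := by
        simpa using hflip x (x + t • s)
      have h7 : ‖t • s‖ = t * ‖s‖ := by
        rw [norm_smul, Real.norm_eq_abs, abs_of_nonneg ht.1]
      calc ‖⟪gradient f (x + t • s) - gradient f x, s⟫‖
          ≤ ‖gradient f (x + t • s) - gradient f x‖ * ‖s‖ := h5
        _ ≤ L * ‖t • s‖ * ‖s‖ := by
            apply mul_le_mul_of_nonneg_right h6 (norm_nonneg s)
        _ = L * ‖s‖ ^ 2 * t := by rw [h7]; ring
    exact fun u hu => image_norm_le_of_norm_deriv_right_le_deriv_boundary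
      hcont hder ha hB hbd hu
  have := key 1 (by norm_num)
  simp [hg, Real.norm_eq_abs] at this
  calc |f (x + s) - f x - ⟪gradient f x, s⟫| = |f (x + s) - 1 * ⟪gradient f x, s⟫ - f x| := by
        ring_nf
    _ ≤ L * ‖s‖ ^ 2 / 2 := by simpa using this
    _ = L / 2 * ‖s‖ ^ 2 := by ring

theorem stmt_4 {n : ℕ} (x : EuclideanSpace ℝ (Fin n)) (δ L κbmh κgrad : ℝ)
    (hδ : 0 < δ) (hL : 0 < L) (hκbmh : 1 ≤ κbmh) (hκgrad : 0 < κgrad)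
    (f m : EuclideanSpace ℝ (Fin n) → ℝ)
    (hf : Differentiable ℝ f)
    (hflip : ∀ a b : EuclideanSpace ℝ (Fin n),
      ‖gradient f b - gradient f a‖ ≤ L * ‖b - a‖)
    (hm : DifferentiableAt ℝ m x)
    (hcurv : ∀ s : EuclideanSpace ℝ (Fin n), ‖s‖ ≤ δ →
      |m (x + s) - m x - ⟪gradient m x, s⟫| ≤ ((κbmh - 1) / 2) * ‖s‖ ^ 2)
    (hgrad : ‖gradient m x - gradient f x‖ ≤ κgrad * δ)
    (φ : EuclideanSpace ℝ (Fin n) → ℝ)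
    (s : EuclideanSpace ℝ (Fin n)) (hs : ‖s‖ ≤ δ) :
    |(f x + φ x - f (x + s) - φ (x + s)) - (m x + φ x - m (x + s) - φ (x + s))| ≤
        2 * ((L + κbmh + 2 * κgrad) / 4) * δ ^ 2 ∧
      (0 ≤ m x + φ x - m (x + s) - φ (x + s) →
        -(f x + φ x - f (x + s) - φ (x + s)) ≤
          2 * ((L + κbmh + 2 * κgrad) / 4) * δ ^ 2) := by
  have hA := descent_aux f L hL.le hf hflip x s
  have hM := hcurv s hs
  have hsq : ‖s‖ ^ 2 ≤ δ ^ 2 := by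
    have := norm_nonneg s
    nlinarith
  have hI : |⟪gradient m x - gradient f x, s⟫| ≤ κgrad * δ * δ := by
    calc |⟪gradient m x - gradient f x, s⟫| ≤
        ‖gradient m x - gradient f x‖ * ‖s‖ := abs_real_inner_le_norm _ _
      _ ≤ (κgrad * δ) * δ := by
          apply mul_le_mul hgrad hs (norm_nonneg s)
          positivity
  have heq : (f x + φ x - f (x + s) - φ (x + s)) - (m x + φ x - m (x + s) - φ (x + s))
      = (m (x + s) - m x - ⟪gradient m x, s⟫)
        - (f (x + s) - f x - ⟪gradient f x, s⟫)
        + ⟪gradient m x - gradient f x, s⟫ := by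
    rw [inner_sub_left]; ring
  have hbound : |(f x + φ x - f (x + s) - φ (x + s)) -
      (m x + φ x - m (x + s) - φ (x + s))| ≤ 2 * ((L + κbmh + 2 * κgrad) / 4) * δ ^ 2 := by
    rw [heq]
    have h1 := abs_sub (m (x + s) - m x - ⟪gradient m x, s⟫)
      (f (x + s) - f x - ⟪gradient f x, s⟫)
    have h2 := abs_add_le ((m (x + s) - m x - ⟪gradient m x, s⟫)
      - (f (x + s) - f x - ⟪gradient f x, s⟫)) (⟪gradient m x - gradient f x, s⟫)
    have hκ0 : (0:ℝ) ≤ (κbmh - 1) / 2 := by linarith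
    nlinarith [abs_nonneg (m (x + s) - m x - ⟪gradient m x, s⟫),
      abs_nonneg (f (x + s) - f x - ⟪gradient f x, s⟫)]
  refine ⟨hbound, fun hp => ?_⟩
  have := abs_le.mp hbound
  linarith [this.1]
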